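/- Let R > 0, p, m ≥ 1, let a₁, …, a_m ∈ ℝ^p, let x* ∈ ℝ^p with ‖x*‖ ≤ R, let σ(α) = e^α/(1 + e^α) be the logistic function, set b_i = σ(⟨a_i, x*⟩) for i ∈ [m], and define f(x) = (1/(2m)) Σ_{i=1}^m (σ(⟨a_i, x⟩) − b_i)². Then f is Γ-weakly smooth with respect to x* with Γ = (max_{i∈[m]} ‖a_i‖²)/8; that is, for every x ∈ ℝ^p, ‖∇f(x)‖² ≤ ((max_{i∈[m]} ‖a_i‖²)/8) · (f(x) − f(x*)), where f(x*) = 0. -/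

import Mathlib

open RealInnerProductSpace

noncomputable def glmAuxφ : ℝ → ℝ := fun t => Real.exp t / (1 + Real.exp t)
noncomputable def glmAuxφ' : ℝ → ℝ := fun t => Real.exp t / (1 + Real.exp t)^2

theorem glmAux_hasDerivAt (α : ℝ) : HasDerivAt glmAuxφ (glmAuxφ' α) α := by
  have h1 := Real.hasDerivAt_exp α
  have h2 := h1.const_add 1
  have hne : (1 + Real.exp α) ≠ 0 := by positivity
  have := h1.div h2 hne
  refine this.congr_deriv ?_
  simp only [glmAuxφ']
  field_simp; ring

theorem glmAux_deriv_nonneg (α : ℝ) : 0 ≤ glmAuxφ' α := by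
  unfold glmAuxφ'; positivity

theorem glmAux_deriv_le (α : ℝ) : glmAuxφ' α ≤ 1/4 := by
  unfold glmAuxφ'
  rw [div_le_iff₀ (by positivity)]
  nlinarith [sq_nonneg (1 - Real.exp α), Real.exp_pos α]

theorem glmAux_gradcalc (p m : ℕ) [NeZero m] (a : Fin m → EuclideanSpace ℝ (Fin p))
    (b : Fin m → ℝ) (x : EuclideanSpace ℝ (Fin p)) :
    HasGradientAt (fun z => (1 / (2 * (m:ℝ))) * ∑ i : Fin m, (glmAuxφ ⟪a i, z⟫ - b i)^2)
      (∑ i : Fin m, ((1/(m:ℝ)) * (glmAuxφ' ⟪a i, x⟫ * (glmAuxφ ⟪a i, x⟫ - b i))) • a i) x := by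
  have hi : ∀ i : Fin m,
      HasFDerivAt (fun z : EuclideanSpace ℝ (Fin p) => (glmAuxφ ⟪a i, z⟫ - b i)^2)
      ((2 * (glmAuxφ ⟪a i, x⟫ - b i) * glmAuxφ' ⟪a i, x⟫) • innerSL ℝ (a i)) x := by
    intro i
    have h0 : HasFDerivAt (fun z : EuclideanSpace ℝ (Fin p) => ⟪a i, z⟫) (innerSL ℝ (a i)) x :=
      (innerSL ℝ (a i)).hasFDerivAt
    have hψ : HasDerivAt (fun t => (glmAuxφ t - b i)^2)
        (2 * (glmAuxφ ⟪a i, x⟫ - b i) * glmAuxφ' ⟪a i, x⟫) ⟪a i, x⟫ := by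
      have := ((glmAux_hasDerivAt (⟪a i, x⟫ : ℝ)).sub_const (b i)).pow 2
      refine this.congr_deriv ?_
      ring
    exact hψ.comp_hasFDerivAt x h0
  have hsum := HasFDerivAt.sum (fun i (_ : i ∈ Finset.univ) => hi i)
  have hF := hsum.const_mul (1 / (2 * (m:ℝ)))
  rw [hasGradientAt_iff_hasFDerivAt]
  convert hF using 1
  · rfl
  · funext z; simp only [Finset.sum_apply]
  ext y
  simp only [InnerProductSpace.toDual_apply_apply, sum_inner, real_inner_smul_left,
    ContinuousLinearMap.smul_apply, ContinuousLinearMap.sum_apply, innerSL_apply_apply, smul_eq_mul,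
    Finset.mul_sum]
  refine Finset.sum_congr rfl fun i _ => ?_
  have hm : (m:ℝ) ≠ 0 := Nat.cast_ne_zero.mpr (NeZero.ne m)
  field_simp

/-- The GLM loss with logistic link σ and realizable labels b_i = σ(⟨a_i, x*⟩) is
Γ-weakly smooth with respect to x*, with Γ = (max_i ‖a_i‖²)/8, and f(x*) = 0. -/
theorem glm_logistic_weakly_smooth
    (R : ℝ) (hR : 0 < R)
    (p m : ℕ) (hp : 1 ≤ p) [NeZero m]
    (a : Fin m → EuclideanSpace ℝ (Fin p))
    (xstar : EuclideanSpace ℝ (Fin p)) (hxstar : ‖xstar‖ ≤ R)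
    (σ : ℝ → ℝ) (hσ : ∀ α : ℝ, σ α = Real.exp α / (1 + Real.exp α))
    (b : Fin m → ℝ) (hb : ∀ i, b i = σ ⟪a i, xstar⟫)
    (f : EuclideanSpace ℝ (Fin p) → ℝ)
    (hf : ∀ z, f z = (1 / (2 * (m : ℝ))) * ∑ i : Fin m, (σ ⟪a i, z⟫ - b i)^2) :
    f xstar = 0 ∧
    ∀ x : EuclideanSpace ℝ (Fin p),
      ‖gradient f x‖^2 ≤
        ((Finset.univ.sup' Finset.univ_nonempty fun i => ‖a i‖^2) / 8) *
          (f x - f xstar) := by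
  have hσφ : σ = glmAuxφ := funext fun α => by rw [hσ α]; rfl
  subst hσφ
  have hf' : f = fun z => (1 / (2 * (m:ℝ))) * ∑ i : Fin m, (glmAuxφ ⟪a i, z⟫ - b i)^2 :=
    funext hf
  subst hf'
  have hm : (0:ℝ) < (m:ℝ) := Nat.cast_pos.mpr (Nat.pos_of_ne_zero (NeZero.ne m))
  have hfs : (fun z => (1 / (2 * (m:ℝ))) * ∑ i : Fin m, (glmAuxφ ⟪a i, z⟫ - b i)^2) xstar = 0 := by
    simp [hb]
  refine ⟨hfs, fun x => ?_⟩
  rw [(glmAux_gradcalc p m a b x).gradient, hfs, sub_zero]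
  set M : ℝ := Finset.univ.sup' Finset.univ_nonempty fun i => ‖a i‖^2 with hM
  set d : Fin m → ℝ := fun i => glmAuxφ ⟪a i, x⟫ - b i with hd
  have hMi : ∀ i, ‖a i‖^2 ≤ M := fun i => Finset.le_sup' (f := fun j => ‖a j‖^2) (Finset.mem_univ i)
  obtain ⟨i0, -⟩ := (Finset.univ_nonempty : (Finset.univ : Finset (Fin m)).Nonempty)
  have hM0 : 0 ≤ M := le_trans (sq_nonneg _) (hMi i0)
  have hai : ∀ i, ‖a i‖ ≤ Real.sqrt M := by
    intro i
    have := Real.sqrt_le_sqrt (hMi i)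
    rwa [Real.sqrt_sq (norm_nonneg _)] at this
  set v : EuclideanSpace ℝ (Fin p) :=
    ∑ i : Fin m, ((1/(m:ℝ)) * (glmAuxφ' ⟪a i, x⟫ * (glmAuxφ ⟪a i, x⟫ - b i))) • a i with hv
  have hnv : ‖v‖ ≤ ∑ i : Fin m, (1/(4*(m:ℝ))) * |d i| * Real.sqrt M := by
    refine (norm_sum_le _ _).trans (Finset.sum_le_sum fun i _ => ?_)
    rw [norm_smul]
    have h1 : ‖(1/(m:ℝ)) * (glmAuxφ' ⟪a i, x⟫ * (glmAuxφ ⟪a i, x⟫ - b i))‖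
        ≤ (1/(4*(m:ℝ))) * |d i| := by
      rw [Real.norm_eq_abs, abs_mul, abs_mul, abs_of_nonneg (le_of_lt (by positivity : (0:ℝ) < 1/(m:ℝ))),
        abs_of_nonneg (glmAux_deriv_nonneg _)]
      have h2 := glmAux_deriv_le (⟪a i, x⟫ : ℝ)
      have h3 : |glmAuxφ ⟪a i, x⟫ - b i| = |d i| := rfl
      rw [h3]
      have habs : (0:ℝ) ≤ |d i| := abs_nonneg _
      have : glmAuxφ' ⟪a i, x⟫ * |d i| ≤ (1/4) * |d i| :=
        mul_le_mul_of_nonneg_right h2 habs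
      calc 1/(m:ℝ) * (glmAuxφ' ⟪a i, x⟫ * |d i|) ≤ 1/(m:ℝ) * ((1/4) * |d i|) := by
            exact mul_le_mul_of_nonneg_left this (by positivity)
        _ = 1/(4*(m:ℝ)) * |d i| := by ring
    calc ‖(1/(m:ℝ)) * (glmAuxφ' ⟪a i, x⟫ * (glmAuxφ ⟪a i, x⟫ - b i))‖ * ‖a i‖
        ≤ ((1/(4*(m:ℝ))) * |d i|) * Real.sqrt M :=
          mul_le_mul h1 (hai i) (norm_nonneg _) (by positivity)
      _ = (1/(4*(m:ℝ))) * |d i| * Real.sqrt M := by ring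
  have hS : (∑ i : Fin m, (1/(4*(m:ℝ))) * |d i| * Real.sqrt M)
      = Real.sqrt M / (4*(m:ℝ)) * ∑ i : Fin m, |d i| := by
    rw [Finset.mul_sum]
    refine Finset.sum_congr rfl fun i _ => ?_
    ring
  rw [hS] at hnv
  have hvsq : ‖v‖^2 ≤ (Real.sqrt M / (4*(m:ℝ)))^2 * (∑ i : Fin m, |d i|)^2 := by
    have := pow_le_pow_left₀ (norm_nonneg v) hnv 2
    calc ‖v‖^2 ≤ (Real.sqrt M / (4*(m:ℝ)) * ∑ i : Fin m, |d i|)^2 := this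
      _ = (Real.sqrt M / (4*(m:ℝ)))^2 * (∑ i : Fin m, |d i|)^2 := by ring
  have hCS : (∑ i : Fin m, |d i|)^2 ≤ (m:ℝ) * ∑ i : Fin m, (d i)^2 := by
    have := sq_sum_le_card_mul_sum_sq (s := (Finset.univ : Finset (Fin m))) (f := fun i => |d i|)
    simpa [sq_abs] using this
  have hsqM : (Real.sqrt M)^2 = M := Real.sq_sqrt hM0
  have key : ‖v‖^2 ≤ M / (16*(m:ℝ)) * ∑ i : Fin m, (d i)^2 := by
    calc ‖v‖^2 ≤ (Real.sqrt M / (4*(m:ℝ)))^2 * (∑ i : Fin m, |d i|)^2 := hvsq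
      _ ≤ (Real.sqrt M / (4*(m:ℝ)))^2 * ((m:ℝ) * ∑ i : Fin m, (d i)^2) := by
          exact mul_le_mul_of_nonneg_left hCS (by positivity)
      _ = M / (16*(m:ℝ)) * ∑ i : Fin m, (d i)^2 := by
          rw [div_pow, hsqM]; field_simp; ring
  refine key.trans_eq ?_
  simp only [hd]
  ring
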